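/- Let W_θ ∈ ℝ^{n_θ×n_θ} be symmetric positive definite, M_u ∈ ℝ^{n_u×n_u} symmetric positive definite, α_d > 0, W_d = (1/α_d)(I_N ⊗ M_u), and A ∈ ℝ^{n_u N×n_θ}. Suppose A = Ξ Φ Ψᵀ W_θ with Ξᵀ (I_N ⊗ M_u) Ξ = I_{n_u N}, Ψᵀ W_θ Ψ = I_{n_u N}, and Φ ∈ ℝ^{n_u N×n_u N} diagonal with nonnegative entries whose squares are indexed as μ_i/λ_j (i = 1,…,N; j = 1,…,n_u) with μ_i ≥ 0 and λ_j > 0. Then the posterior covariance matrix satisfies Σ_θ := (W_θ + Aᵀ W_d A)^{-1} = W_θ^{-1} − Ψ D Ψᵀ, where D is the diagonal matrix with entries μ_i/(μ_i + α_d λ_j). -/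

import Mathlib

open Matrix
open scoped Kronecker

/-- With prior precision `Wθ` (SPD), noise precision
`Wd = (1/α_d)(I_N ⊗ Mu)`, and generalized singular value decomposition
`A = Ξ Φ Ψᵀ Wθ` (`Ξ` being `(I_N ⊗ Mu)`-orthonormal, `Ψ` being `Wθ`-orthonormal,
squared singular values `μ_i/λ_j`), the posterior covariance satisfies
`Σθ = (Wθ + Aᵀ Wd A)⁻¹ = Wθ⁻¹ − Ψ D Ψᵀ`, where `D` is diagonal with entries
`μ_i/(μ_i + α_d λ_j)`. -/
theorem posterior_covariance_formula
    {nθ N nu : ℕ}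
    (Wθ : Matrix (Fin nθ) (Fin nθ) ℝ) (hWθ : Wθ.PosDef)
    (Mu : Matrix (Fin nu) (Fin nu) ℝ) (hMu : Mu.PosDef)
    (αd : ℝ) (hαd : 0 < αd)
    (Wd : Matrix (Fin N × Fin nu) (Fin N × Fin nu) ℝ)
    (hWd : Wd = (1 / αd) • ((1 : Matrix (Fin N) (Fin N) ℝ) ⊗ₖ Mu))
    (A : Matrix (Fin N × Fin nu) (Fin nθ) ℝ)
    (Ξ : Matrix (Fin N × Fin nu) (Fin N × Fin nu) ℝ)
    (Ψ : Matrix (Fin nθ) (Fin N × Fin nu) ℝ)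
    (μ : Fin N → ℝ) (lam : Fin nu → ℝ)
    (hμ : ∀ i, 0 ≤ μ i) (hlam : ∀ j, 0 < lam j)
    (hGSVD : A = Ξ * Matrix.diagonal
        (fun p : Fin N × Fin nu => Real.sqrt (μ p.1 / lam p.2)) * Ψᵀ * Wθ)
    (hΞ : Ξᵀ * ((1 : Matrix (Fin N) (Fin N) ℝ) ⊗ₖ Mu) * Ξ = 1)
    (hΨ : Ψᵀ * Wθ * Ψ = 1) :
    (Wθ + Aᵀ * Wd * A)⁻¹
      = Wθ⁻¹ - Ψ * Matrix.diagonal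
          (fun p : Fin N × Fin nu => μ p.1 / (μ p.1 + αd * lam p.2)) * Ψᵀ := by
  set Φ : Matrix (Fin N × Fin nu) (Fin N × Fin nu) ℝ :=
    Matrix.diagonal (fun p : Fin N × Fin nu => Real.sqrt (μ p.1 / lam p.2)) with hΦ
  set C : Matrix (Fin N × Fin nu) (Fin N × Fin nu) ℝ :=
    Matrix.diagonal (fun p : Fin N × Fin nu => μ p.1 / (αd * lam p.2)) with hC
  set D : Matrix (Fin N × Fin nu) (Fin N × Fin nu) ℝ :=
    Matrix.diagonal (fun p : Fin N × Fin nu => μ p.1 / (μ p.1 + αd * lam p.2)) with hD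
  have hWθunit : IsUnit Wθ.det := isUnit_iff_ne_zero.mpr (ne_of_gt hWθ.det_pos)
  have hWθsym : Wθᵀ = Wθ := by
    have := hWθ.isHermitian.eq
    rwa [Matrix.conjTranspose_eq_transpose_of_trivial] at this
  -- Φ squared
  have hΦΦ : (1 / αd) • (Φ * Φ) = C := by
    rw [hΦ, hC, Matrix.diagonal_mul_diagonal, ← Matrix.diagonal_smul]
    refine congrArg Matrix.diagonal ?_
    funext p
    have h1 : (0:ℝ) ≤ μ p.1 / lam p.2 := div_nonneg (hμ p.1) (hlam p.2).le
    simp only [Pi.smul_apply, smul_eq_mul]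
    rw [Real.mul_self_sqrt h1]
    field_simp
  -- compute Aᵀ Wd A
  have hAWA : Aᵀ * Wd * A = Wθ * Ψ * C * Ψᵀ * Wθ := by
    rw [hGSVD, hWd]
    rw [Matrix.transpose_mul, Matrix.transpose_mul, Matrix.transpose_mul,
      Matrix.transpose_transpose, hΦ, Matrix.diagonal_transpose, hWθsym]
    rw [Matrix.mul_smul, Matrix.smul_mul]
    have : Wθ * (Ψ * (Matrix.diagonal (fun p : Fin N × Fin nu =>
        Real.sqrt (μ p.1 / lam p.2)) * Ξᵀ)) *
        ((1 : Matrix (Fin N) (Fin N) ℝ) ⊗ₖ Mu) *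
        (Ξ * Matrix.diagonal (fun p : Fin N × Fin nu =>
          Real.sqrt (μ p.1 / lam p.2)) * Ψᵀ * Wθ)
        = Wθ * Ψ * (Matrix.diagonal (fun p : Fin N × Fin nu =>
            Real.sqrt (μ p.1 / lam p.2)) *
          (Ξᵀ * ((1 : Matrix (Fin N) (Fin N) ℝ) ⊗ₖ Mu) * Ξ) *
          Matrix.diagonal (fun p : Fin N × Fin nu =>
            Real.sqrt (μ p.1 / lam p.2))) * Ψᵀ * Wθ := by
      simp only [Matrix.mul_assoc]
    rw [this, hΞ, Matrix.mul_one]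
    have h2 : (1 / αd) • (Wθ * Ψ * (Φ * Φ) * Ψᵀ * Wθ)
        = Wθ * Ψ * ((1 / αd) • (Φ * Φ)) * Ψᵀ * Wθ := by
      simp [Matrix.mul_smul, Matrix.smul_mul]
    rw [← hΦ, h2, hΦΦ]
  -- diagonal identity: C - D - C*D = 0
  have hCD : C - D - C * D = 0 := by
    rw [hC, hD, Matrix.diagonal_mul_diagonal, Matrix.diagonal_sub, Matrix.diagonal_sub]
    have : (fun p : Fin N × Fin nu => μ p.1 / (αd * lam p.2)
        - μ p.1 / (μ p.1 + αd * lam p.2)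
        - μ p.1 / (αd * lam p.2) * (μ p.1 / (μ p.1 + αd * lam p.2)))
        = fun _ => (0:ℝ) := by
      funext p
      have hl : αd * lam p.2 ≠ 0 := (mul_pos hαd (hlam p.2)).ne'
      have hml : μ p.1 + αd * lam p.2 ≠ 0 :=
        (add_pos_of_nonneg_of_pos (hμ p.1) (mul_pos hαd (hlam p.2))).ne'
      field_simp
      rw [add_div, mul_div_cancel_right₀ _ (hlam p.2).ne']
      ring
    rw [this, Matrix.diagonal_zero]
  clear_value Φ C D
  apply Matrix.inv_eq_right_inv
  rw [hAWA]
  have expand : (Wθ + Wθ * Ψ * C * Ψᵀ * Wθ) * (Wθ⁻¹ - Ψ * D * Ψᵀ)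
      = Wθ * Wθ⁻¹ - Wθ * (Ψ * D * Ψᵀ)
        + Wθ * Ψ * C * Ψᵀ * (Wθ * Wθ⁻¹)
        - Wθ * Ψ * C * (Ψᵀ * Wθ * Ψ) * D * Ψᵀ := by
    noncomm_ring
    simp only [Matrix.mul_assoc]
  rw [expand, Matrix.mul_nonsing_inv _ hWθunit, hΨ, Matrix.mul_one, Matrix.mul_one]
  have final : (1 : Matrix (Fin nθ) (Fin nθ) ℝ) - Wθ * (Ψ * D * Ψᵀ)
      + Wθ * Ψ * C * Ψᵀ - Wθ * Ψ * C * D * Ψᵀ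
      = 1 + Wθ * Ψ * (C - D - C * D) * Ψᵀ := by
    noncomm_ring
    simp only [Matrix.add_mul, Matrix.smul_mul, Matrix.mul_add, Matrix.mul_smul,
      Matrix.mul_assoc]
    abel
  rw [final, hCD]
  simp
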